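/- (Banasiak–Moszyński criterion.) Let (T(t))_{t≥0} be a strongly continuous semigroup on a separable complex Banach space B. Assume there exist an open connected set Ω ⊆ ℂ with Ω ∩ iℝ ≠ ∅ and a map F : Ω → B, not identically zero, such that: (a) T(t)F(λ) = e^{λt}F(λ) for all λ ∈ Ω and all t ≥ 0; (b) for every continuous linear functional φ ∈ B′ the map λ ↦ φ(F(λ)) is holomorphic on Ω. Then T is subspace chaotic; more precisely, the closed linear span V of {F(λ) : λ ∈ Ω} is a non-zero closed subspace of B satisfying T(t)V ⊆ V for all t ≥ 0, and the restriction of T to V is chaotic on V: there exists f ∈ V whose orbit {T(t)f : t ≥ 0} is dense in V, and the set {f ∈ V : ∃ t > 0 with T(t)f = f} is dense in V. -/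

import Mathlib

open Filter Set Topology

/-- Hahn–Banach separation of a point from a submodule's closure. -/
lemma aux_sep {B : Type*} [NormedAddCommGroup B] [NormedSpace ℂ B]
    (M : Submodule ℂ B) {x : B} (hx : x ∉ M.topologicalClosure) :
    ∃ φ : B →L[ℂ] ℂ, (∀ y ∈ M, φ y = 0) ∧ φ x ≠ 0 := by
  set N := M.topologicalClosure with hN
  haveI : IsClosed (N : Set B) := M.isClosed_topologicalClosure
  have hmk : ∀ m : B, ‖(Submodule.Quotient.mk m : B ⧸ N)‖ ≤ 1 * ‖m‖ := by
    intro m; simpa using Submodule.Quotient.norm_mk_le N m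
  let π : B →L[ℂ] B ⧸ N := LinearMap.mkContinuous N.mkQ 1 hmk
  have hxq : (Submodule.Quotient.mk x : B ⧸ N) ≠ 0 := by
    simpa [Submodule.Quotient.mk_eq_zero] using hx
  obtain ⟨g, -, hg⟩ := exists_dual_vector ℂ _ (norm_ne_zero_iff.2 hxq)
  refine ⟨g.comp π, fun y hy => ?_, ?_⟩
  · have : (Submodule.Quotient.mk y : B ⧸ N) = 0 := by
      simpa [Submodule.Quotient.mk_eq_zero] using M.le_topologicalClosure hy
    simp only [ContinuousLinearMap.comp_apply]
    have hπ : π y = (Submodule.Quotient.mk y : B ⧸ N) := rfl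
    rw [hπ, this, map_zero]
  · have hπ : π x = (Submodule.Quotient.mk x : B ⧸ N) := rfl
    simp only [ContinuousLinearMap.comp_apply, hπ, hg]
    exact Complex.ofReal_ne_zero.2 (norm_ne_zero_iff.2 hxq)

/-- Density of the span of eigenvectors over a subset having an accumulation point. -/
lemma aux_dense {B : Type*} [NormedAddCommGroup B] [NormedSpace ℂ B]
    (Ω S : Set ℂ) (hΩopen : IsOpen Ω) (hΩconn : IsPreconnected Ω)
    (F : ℂ → B) (hFhol : ∀ φ : B →L[ℂ] ℂ, DifferentiableOn ℂ (fun z => φ (F z)) Ω)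
    (z₀ : ℂ) (hz₀ : z₀ ∈ Ω) (seq : ℕ → ℂ)
    (h1 : Tendsto seq atTop (𝓝 z₀)) (h2 : ∀ n, seq n ≠ z₀) (h3 : ∀ᶠ n in atTop, seq n ∈ S) :
    Submodule.span ℂ (F '' Ω) ≤ (Submodule.span ℂ (F '' S)).topologicalClosure := by
  rw [Submodule.span_le]
  rintro - ⟨w, hw, rfl⟩
  by_contra hx
  obtain ⟨φ, hφ0, hφx⟩ := aux_sep _ hx
  have hA : AnalyticOnNhd ℂ (fun z => φ (F z)) Ω := (hFhol φ).analyticOnNhd hΩopen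
  have htend : Tendsto seq atTop (𝓝[≠] z₀) :=
    tendsto_nhdsWithin_of_tendsto_nhds_of_eventually_within _ h1 (Eventually.of_forall h2)
  have hfreq : ∃ᶠ z in 𝓝[≠] z₀, φ (F z) = 0 := by
    apply htend.frequently
    apply (h3.mono ?_).frequently
    intro n hn
    exact hφ0 _ (Submodule.subset_span ⟨seq n, hn, rfl⟩)
  have hEq := hA.eqOn_zero_of_preconnected_of_frequently_eq_zero hΩconn hz₀ hfreq
  exact hφx (hEq hw)

/-- Decay of `exp (z * t)` as `t → ∞` when `Re z < 0`. -/
lemma aux_exp_decay {z : ℂ} (hz : z.re < 0) :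
    Tendsto (fun t : ℝ => Complex.exp (z * t)) atTop (𝓝 0) := by
  rw [tendsto_zero_iff_norm_tendsto_zero]
  have h : ∀ t : ℝ, ‖Complex.exp (z * t)‖ = Real.exp (z.re * t) := by
    intro t
    rw [Complex.norm_exp]
    congr 1
    simp [Complex.mul_re]
  simp only [h]
  exact Real.tendsto_exp_atBot.comp ((tendsto_const_mul_atBot_of_neg hz).2 tendsto_id)

theorem banasiak_moszynski_criterion
    {B : Type*} [NormedAddCommGroup B] [NormedSpace ℂ B] [CompleteSpace B]
    [TopologicalSpace.SeparableSpace B]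
    (T : ℝ → B →L[ℂ] B)
    (hT0 : T 0 = 1)
    (hTadd : ∀ s t : ℝ, 0 ≤ s → 0 ≤ t → T (s + t) = (T s).comp (T t))
    (hTcont : ∀ f : B, ContinuousOn (fun t => T t f) (Set.Ici (0 : ℝ)))
    (Ω : Set ℂ) (hΩopen : IsOpen Ω) (hΩconn : IsConnected Ω)
    (hΩim : ∃ z ∈ Ω, z.re = 0)
    (F : ℂ → B)
    (hFne : ∃ z ∈ Ω, F z ≠ 0)
    (hFeig : ∀ z ∈ Ω, ∀ t : ℝ, 0 ≤ t → T t (F z) = Complex.exp (z * t) • F z)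
    (hFhol : ∀ φ : B →L[ℂ] ℂ, DifferentiableOn ℂ (fun z => φ (F z)) Ω) :
    (Submodule.span ℂ (F '' Ω)).topologicalClosure ≠ ⊥ ∧
    (∀ t : ℝ, 0 ≤ t → ∀ x ∈ (Submodule.span ℂ (F '' Ω)).topologicalClosure,
      T t x ∈ (Submodule.span ℂ (F '' Ω)).topologicalClosure) ∧
    (∃ f ∈ (Submodule.span ℂ (F '' Ω)).topologicalClosure,
      ∀ g ∈ (Submodule.span ℂ (F '' Ω)).topologicalClosure,
        ∀ ε : ℝ, 0 < ε → ∃ t : ℝ, 0 ≤ t ∧ ‖T t f - g‖ < ε) ∧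
    (∀ g ∈ (Submodule.span ℂ (F '' Ω)).topologicalClosure,
      ∀ ε : ℝ, 0 < ε → ∃ f ∈ (Submodule.span ℂ (F '' Ω)).topologicalClosure,
        (∃ t : ℝ, 0 < t ∧ T t f = f) ∧ ‖f - g‖ < ε) := by
  obtain ⟨z₀, hz₀Ω, hz₀re⟩ := hΩim
  set V := (Submodule.span ℂ (F '' Ω)).topologicalClosure with hV
  -- basic sequences converging to z₀
  have htend0 : Tendsto (fun n : ℕ => ((1 / (n + 1) : ℝ) : ℂ)) atTop (𝓝 0) := by
    have h1 : Tendsto (fun n : ℕ => (1 / (n + 1) : ℝ)) atTop (𝓝 0) :=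
      tendsto_one_div_add_atTop_nhds_zero_nat
    have := (Complex.continuous_ofReal.tendsto 0).comp h1
    simpa [Function.comp_def] using this
  have hc_ne : ∀ n : ℕ, ((1 / (n + 1) : ℝ) : ℂ) ≠ 0 := by
    intro n
    exact Complex.ofReal_ne_zero.2 (one_div_ne_zero (Nat.cast_add_one_ne_zero n))
  -- Part 1 : V ≠ ⊥
  have hVne : V ≠ ⊥ := by
    obtain ⟨z1, hz1, hz1ne⟩ := hFne
    intro hbot
    have : F z1 ∈ V :=
      (Submodule.span ℂ (F '' Ω)).le_topologicalClosure
        (Submodule.subset_span ⟨z1, hz1, rfl⟩)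
    rw [hbot, Submodule.mem_bot] at this
    exact hz1ne this
  -- Part 2 : invariance
  have hTspan : ∀ t : ℝ, 0 ≤ t → ∀ x ∈ Submodule.span ℂ (F '' Ω),
      T t x ∈ Submodule.span ℂ (F '' Ω) := by
    intro t ht x hx
    induction hx using Submodule.span_induction with
    | mem y hy =>
      obtain ⟨z, hz, rfl⟩ := hy
      rw [hFeig z hz t ht]
      exact Submodule.smul_mem _ _ (Submodule.subset_span ⟨z, hz, rfl⟩)
    | zero => simpa using Submodule.zero_mem _
    | add a b _ _ ha hb => rw [map_add]; exact Submodule.add_mem _ ha hb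
    | smul c a _ ha => rw [map_smul]; exact Submodule.smul_mem _ _ ha
  have hTV : ∀ t : ℝ, 0 ≤ t → ∀ x ∈ V, T t x ∈ V := by
    intro t ht x hx
    have hx' : x ∈ closure (Submodule.span ℂ (F '' Ω) : Set B) := hx
    have : T t x ∈ closure (Submodule.span ℂ (F '' Ω) : Set B) :=
      map_mem_closure (T t).continuous hx' (fun y hy => hTspan t ht y hy)
    exact this
  -- density lemmas for half planes
  have hconn : IsPreconnected Ω := hΩconn.isPreconnected
  have hseq_mem : ∀ seq : ℕ → ℂ, Tendsto seq atTop (𝓝 z₀) → ∀ᶠ n in atTop, seq n ∈ Ω := by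
    intro seq h
    exact h.eventually (hΩopen.eventually_mem hz₀Ω)
  have hdenseNeg : Submodule.span ℂ (F '' Ω) ≤
      (Submodule.span ℂ (F '' (Ω ∩ {z | z.re < 0}))).topologicalClosure := by
    have ht : Tendsto (fun n : ℕ => z₀ - ((1 / (n + 1) : ℝ) : ℂ)) atTop (𝓝 z₀) := by
      simpa using tendsto_const_nhds.sub htend0
    refine aux_dense Ω _ hΩopen hconn F hFhol z₀ hz₀Ω _ ht (fun n => ?_) ?_
    · intro h
      exact hc_ne n (sub_eq_self.mp h)
    · filter_upwards [hseq_mem _ ht] with n hn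
      refine ⟨hn, ?_⟩
      simp only [mem_setOf_eq, Complex.sub_re, hz₀re, Complex.ofReal_re]
      have : (0 : ℝ) < 1 / (n + 1) := by positivity
      linarith
  have hdensePos : Submodule.span ℂ (F '' Ω) ≤
      (Submodule.span ℂ (F '' (Ω ∩ {z | 0 < z.re}))).topologicalClosure := by
    have ht : Tendsto (fun n : ℕ => z₀ + ((1 / (n + 1) : ℝ) : ℂ)) atTop (𝓝 z₀) := by
      simpa using tendsto_const_nhds.add htend0
    refine aux_dense Ω _ hΩopen hconn F hFhol z₀ hz₀Ω _ ht (fun n => ?_) ?_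
    · intro h
      exact hc_ne n (by simpa using h)
    · filter_upwards [hseq_mem _ ht] with n hn
      refine ⟨hn, ?_⟩
      simp only [mem_setOf_eq, Complex.add_re, hz₀re, Complex.ofReal_re]
      positivity
  -- submodule of orbits tending to zero
  let M₀ : Submodule ℂ B :=
    { carrier := {x | Tendsto (fun t : ℝ => T t x) atTop (𝓝 0)}
      add_mem' := by
        intro a b ha hb
        have := ha.add hb
        simpa using this
      zero_mem' := by simpa using (tendsto_const_nhds : Tendsto (fun _ : ℝ => (0 : B)) atTop _)
      smul_mem' := by
        intro c x hx
        have := hx.const_smul c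
        simpa using this }
  have hM₀ : ∀ z ∈ Ω, z.re < 0 → F z ∈ M₀ := by
    intro z hz hzre
    show Tendsto (fun t : ℝ => T t (F z)) atTop (𝓝 0)
    have h1 : Tendsto (fun t : ℝ => Complex.exp (z * t) • F z) atTop (𝓝 0) := by
      simpa using (aux_exp_decay hzre).smul_const (F z)
    refine h1.congr' ?_
    filter_upwards [eventually_ge_atTop (0 : ℝ)] with t ht
    exact (hFeig z hz t ht).symm
  -- submodule of targets with vanishing backward orbits
  let N₀ : Submodule ℂ B :=
    { carrier := {y | ∃ s : ℝ → B, (∀ t : ℝ, 0 ≤ t → T t (s t) = y) ∧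
        (∀ t : ℝ, s t ∈ Submodule.span ℂ (F '' Ω)) ∧ Tendsto s atTop (𝓝 0)}
      add_mem' := by
        rintro a b ⟨s1, hs1, hs1m, hs1t⟩ ⟨s2, hs2, hs2m, hs2t⟩
        refine ⟨fun t => s1 t + s2 t, fun t ht => by rw [map_add, hs1 t ht, hs2 t ht],
          fun t => Submodule.add_mem _ (hs1m t) (hs2m t), by simpa using hs1t.add hs2t⟩
      zero_mem' := ⟨fun _ => 0, fun t _ => by simp, fun t => Submodule.zero_mem _,
        tendsto_const_nhds⟩
      smul_mem' := by
        rintro c x ⟨s, hs, hsm, hst⟩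
        refine ⟨fun t => c • s t, fun t ht => by rw [map_smul, hs t ht],
          fun t => Submodule.smul_mem _ _ (hsm t), by simpa using hst.const_smul c⟩ }
  have hN₀ : ∀ z ∈ Ω, 0 < z.re → F z ∈ N₀ := by
    intro z hz hzre
    refine ⟨fun t => Complex.exp (-(z * t)) • F z, fun t ht => ?_, fun t =>
      Submodule.smul_mem _ _ (Submodule.subset_span ⟨z, hz, rfl⟩), ?_⟩
    · rw [map_smul, hFeig z hz t ht, smul_smul, ← Complex.exp_add, neg_add_cancel,
        Complex.exp_zero, one_smul]
    · have : (-z).re < 0 := by simpa using hzre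
      have h := (aux_exp_decay this).smul_const (F z)
      simp only [neg_mul] at h ⊢
      simpa using h
  -- transitivity
  have hsubV : ∀ S : Set ℂ, S ⊆ Ω → Submodule.span ℂ (F '' S) ≤ Submodule.span ℂ (F '' Ω) :=
    fun S hS => Submodule.span_mono (fun _ ⟨a, ha, h⟩ => ⟨a, hS ha, h⟩)
  have hVle : ∀ S : Set ℂ, Submodule.span ℂ (F '' Ω) ≤
      (Submodule.span ℂ (F '' S)).topologicalClosure →
      V ≤ (Submodule.span ℂ (F '' S)).topologicalClosure := by
    intro S h
    exact Submodule.topologicalClosure_minimal _ h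
      (Submodule.isClosed_topologicalClosure _)
  have htrans : ∀ x₀ ∈ V, ∀ g ∈ V, ∀ ε : ℝ, 0 < ε → ∀ δ : ℝ, 0 < δ →
      ∃ f ∈ Submodule.span ℂ (F '' Ω), ∃ t : ℝ, 0 ≤ t ∧ ‖f - x₀‖ < ε ∧ ‖T t f - g‖ < δ := by
    intro x₀ hx₀ g hg ε hε δ hδ
    have hx₀' : x₀ ∈ closure (Submodule.span ℂ (F '' (Ω ∩ {z | z.re < 0})) : Set B) :=
      hVle _ hdenseNeg hx₀
    obtain ⟨x, hxmem, hxd⟩ := Metric.mem_closure_iff.1 hx₀' (ε / 2) (by positivity)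
    have hg' : g ∈ closure (Submodule.span ℂ (F '' (Ω ∩ {z | 0 < z.re})) : Set B) :=
      hVle _ hdensePos hg
    obtain ⟨y, hymem, hyd⟩ := Metric.mem_closure_iff.1 hg' (δ / 2) (by positivity)
    have hxM : x ∈ M₀ := by
      have : Submodule.span ℂ (F '' (Ω ∩ {z | z.re < 0})) ≤ M₀ := by
        rw [Submodule.span_le]
        rintro - ⟨z, ⟨hzΩ, hzre⟩, rfl⟩
        exact hM₀ z hzΩ hzre
      exact this hxmem
    have hyN : y ∈ N₀ := by
      have : Submodule.span ℂ (F '' (Ω ∩ {z | 0 < z.re})) ≤ N₀ := by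
        rw [Submodule.span_le]
        rintro - ⟨z, ⟨hzΩ, hzre⟩, rfl⟩
        exact hN₀ z hzΩ hzre
      exact this hymem
    obtain ⟨s, hsT, hsm, hst⟩ := hyN
    have hxM' : Tendsto (fun t : ℝ => T t x) atTop (𝓝 0) := hxM
    have hev1 : ∀ᶠ t : ℝ in atTop, ‖T t x‖ < δ / 2 := by
      have := Metric.tendsto_nhds.1 hxM' (δ / 2) (by positivity)
      simpa [dist_zero_right] using this
    have hev2 : ∀ᶠ t : ℝ in atTop, ‖s t‖ < ε / 2 := by
      have := Metric.tendsto_nhds.1 hst (ε / 2) (by positivity)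
      simpa [dist_zero_right] using this
    obtain ⟨t, ht1, ht2, ht0⟩ := (hev1.and (hev2.and (eventually_ge_atTop (0 : ℝ)))).exists
    refine ⟨x + s t, Submodule.add_mem _ (hsubV _ inter_subset_left hxmem) (hsm t),
      t, ht0, ?_, ?_⟩
    · have h1 : ‖x - x₀‖ < ε / 2 := by
        rw [← dist_eq_norm, dist_comm]; exact hxd
      calc ‖x + s t - x₀‖ = ‖(x - x₀) + s t‖ := by rw [add_sub_right_comm]
        _ ≤ ‖x - x₀‖ + ‖s t‖ := norm_add_le _ _
        _ < ε / 2 + ε / 2 := by exact add_lt_add h1 ht2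
        _ = ε := by ring
    · have hTt : T t (x + s t) = T t x + y := by rw [map_add, hsT t ht0]
      have h2 : ‖y - g‖ < δ / 2 := by
        rw [← dist_eq_norm, dist_comm]; exact hyd
      calc ‖T t (x + s t) - g‖ = ‖T t x + (y - g)‖ := by rw [hTt, add_sub_assoc]
        _ ≤ ‖T t x‖ + ‖y - g‖ := norm_add_le _ _
        _ < δ / 2 + δ / 2 := add_lt_add ht1 h2
        _ = δ := by ring
  -- ============ periodic points ============
  set b : ℝ := z₀.im with hb
  have hz₀eq : z₀ = (b : ℂ) * Complex.I := by
    apply Complex.ext <;> simp [hz₀re, hb]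
  set β : ℝ := if b = 0 then 1 else b with hβdef
  set r0 : ℚ := if b = 0 then 0 else 1 with hr0def
  have hβ : β ≠ 0 := by
    by_cases hb0 : b = 0 <;> simp [hβdef, hb0]
  have hβr0 : β * ((r0 : ℚ) : ℝ) = b := by
    by_cases hb0 : b = 0 <;> simp [hβdef, hr0def, hb0]
  set E : Set ℂ := {z | z ∈ Ω ∧ ∃ r : ℚ, z = ((β * ((r : ℚ) : ℝ) : ℝ) : ℂ) * Complex.I}
    with hEdef
  have hEsub : E ⊆ Ω := fun z hz => hz.1
  set τ : ℝ := 2 * Real.pi / |β| with hτdef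
  have hτpos : 0 < τ := by
    apply div_pos (by positivity) (abs_pos.2 hβ)
  -- iteration of fixed points
  have hiter : ∀ t : ℝ, 0 ≤ t → ∀ f : B, T t f = f → ∀ k : ℕ, T (t * k) f = f := by
    intro t ht f hf k
    induction k with
    | zero => simp [hT0]
    | succ k ih =>
      have heq : t * ((k : ℝ) + 1) = t * k + t := by ring
      have hk0 : (0 : ℝ) ≤ t * k := mul_nonneg ht (Nat.cast_nonneg k)
      push_cast
      rw [heq, hTadd _ _ hk0 ht]
      simp only [ContinuousLinearMap.comp_apply, hf]
      push_cast at ih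
      exact ih
  set K : ℕ → Submodule ℂ B :=
    fun m => LinearMap.eqLocus ((T (τ * m.factorial)).toLinearMap) LinearMap.id with hKdef
  have hKmem : ∀ m (f : B), f ∈ K m ↔ T (τ * m.factorial) f = f := by
    intro m f
    rw [hKdef, LinearMap.mem_eqLocus]
    simp
  have hKmono : Monotone K := by
    intro m m' hmm f hf
    rw [hKmem] at hf ⊢
    obtain ⟨c, hc⟩ := Nat.factorial_dvd_factorial hmm
    have heq : τ * (m'.factorial : ℝ) = (τ * m.factorial) * c := by
      rw [hc]; push_cast; ring
    rw [heq]
    exact hiter _ (by positivity) f hf c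
  have hKgen : ∀ z ∈ E, ∃ m : ℕ, F z ∈ K m := by
    rintro z ⟨hzΩ, r, rfl⟩
    refine ⟨r.den, ?_⟩
    rw [hKmem]
    have ht : (0 : ℝ) ≤ τ * r.den.factorial := by positivity
    rw [hFeig _ hzΩ _ ht]
    obtain ⟨c, hc⟩ := Nat.dvd_factorial r.pos (le_refl r.den)
    set k : ℤ := r.num * c with hkdef
    have hden : ((r.den : ℝ)) ≠ 0 := Nat.cast_ne_zero.2 r.den_nz
    have hk : (r : ℝ) * (r.den.factorial : ℝ) = (k : ℝ) := by
      rw [Rat.cast_def, hkdef, hc]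
      push_cast
      field_simp
    obtain ⟨e, he⟩ : ∃ e : ℤ, β * ((r : ℚ) : ℝ) * (τ * (r.den.factorial : ℝ)) =
        (e : ℝ) * (2 * Real.pi) := by
      rcases le_or_gt 0 β with h0 | h0
      · refine ⟨k, ?_⟩
        rw [hτdef, abs_of_nonneg h0]
        have h7 : β * ((r : ℚ) : ℝ) * (2 * Real.pi / β * (r.den.factorial : ℝ)) =
            ((r : ℝ) * (r.den.factorial : ℝ)) * (2 * Real.pi) * (β / β) := by ring
        rw [h7, div_self hβ, mul_one, hk]
      · refine ⟨-k, ?_⟩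
        rw [hτdef, abs_of_neg h0]
        have h7 : β * ((r : ℚ) : ℝ) * (2 * Real.pi / -β * (r.den.factorial : ℝ)) =
            -(((r : ℝ) * (r.den.factorial : ℝ)) * (2 * Real.pi)) * (β / β) := by ring
        rw [h7, div_self hβ, mul_one, hk]
        push_cast
        ring
    have hzt : ((β * ((r : ℚ) : ℝ) : ℝ) : ℂ) * Complex.I * ((τ * r.den.factorial : ℝ) : ℂ) =
        (e : ℂ) * (2 * (Real.pi : ℂ) * Complex.I) := by
      have h6 := congrArg (fun x : ℝ => (x : ℂ)) he
      push_cast at h6 ⊢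
      linear_combination Complex.I * h6
    rw [hzt, Complex.exp_int_mul_two_pi_mul_I, one_smul]
  have hspanE : Submodule.span ℂ (F '' E) ≤ ⨆ m, K m := by
    rw [Submodule.span_le]
    rintro - ⟨z, hz, rfl⟩
    obtain ⟨m, hm⟩ := hKgen z hz
    exact Submodule.mem_iSup_of_directed K hKmono.directed_le |>.2 ⟨m, hm⟩
  -- density of E
  have hdenseE : Submodule.span ℂ (F '' Ω) ≤
      (Submodule.span ℂ (F '' E)).topologicalClosure := by
    set seqE : ℕ → ℂ :=
      fun n => ((β * ((r0 + 1 / (n + 1) : ℚ) : ℝ) : ℝ) : ℂ) * Complex.I with hseqE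
    have hq : Tendsto (fun n : ℕ => ((r0 + 1 / (n + 1) : ℚ) : ℝ)) atTop (𝓝 (r0 : ℝ)) := by
      have h1 : Tendsto (fun n : ℕ => (1 / (n + 1) : ℝ)) atTop (𝓝 0) :=
        tendsto_one_div_add_atTop_nhds_zero_nat
      have h2 := tendsto_const_nhds.add h1 (f := fun _ : ℕ => (r0 : ℝ)) (x := atTop)
      rw [add_zero] at h2
      refine h2.congr fun n => ?_
      push_cast
      ring
    have htE : Tendsto seqE atTop (𝓝 z₀) := by
      rw [hz₀eq, ← hβr0]
      have h3 : Tendsto (fun n : ℕ => (β * ((r0 + 1 / (n + 1) : ℚ) : ℝ) : ℝ))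
          atTop (𝓝 (β * (r0 : ℝ))) := tendsto_const_nhds.mul hq
      have h4 := (Complex.continuous_ofReal.tendsto _).comp h3
      exact h4.mul_const Complex.I
    have hrne : ∀ n : ℕ, (r0 + 1 / (n + 1) : ℚ) ≠ r0 := by
      intro n h
      have : (1 / (n + 1) : ℚ) = 0 := by linarith [h]
      have h5 : ((n : ℚ) + 1) ≠ 0 := by positivity
      rw [div_eq_zero_iff] at this
      rcases this with h6 | h6
      · exact one_ne_zero h6
      · exact h5 h6
    refine aux_dense Ω E hΩopen hconn F hFhol z₀ hz₀Ω seqE htE (fun n => ?_) ?_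
    · intro h
      rw [hz₀eq, ← hβr0] at h
      have h1 : ((β * ((r0 + 1 / (n + 1) : ℚ) : ℝ) : ℝ) : ℂ) = ((β * (r0 : ℝ) : ℝ) : ℂ) := by
        have := mul_right_cancel₀ Complex.I_ne_zero h
        exact_mod_cast this
      have h2 : β * ((r0 + 1 / (n + 1) : ℚ) : ℝ) = β * ((r0 : ℚ) : ℝ) :=
        Complex.ofReal_injective h1
      have h3 : ((r0 + 1 / (n + 1) : ℚ) : ℝ) = ((r0 : ℚ) : ℝ) := mul_left_cancel₀ hβ h2
      exact hrne n (by exact_mod_cast h3)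
    · filter_upwards [hseq_mem _ htE] with n hn
      exact ⟨hn, ⟨r0 + 1 / (n + 1), rfl⟩⟩
  -- periodic points are dense
  have hPer : ∀ g ∈ V, ∀ ε : ℝ, 0 < ε → ∃ f ∈ V,
      (∃ t : ℝ, 0 < t ∧ T t f = f) ∧ ‖f - g‖ < ε := by
    intro g hg ε hε
    have hg' : g ∈ closure (Submodule.span ℂ (F '' E) : Set B) := hVle _ hdenseE hg
    obtain ⟨f, hfmem, hfd⟩ := Metric.mem_closure_iff.1 hg' ε hε
    obtain ⟨m, hm⟩ := (Submodule.mem_iSup_of_directed K hKmono.directed_le).1 (hspanE hfmem)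
    refine ⟨f, (Submodule.span ℂ (F '' Ω)).le_topologicalClosure (hsubV E hEsub hfmem),
      ⟨τ * m.factorial, ?_, (hKmem m f).1 hm⟩, ?_⟩
    · exact mul_pos hτpos (Nat.cast_pos.2 m.factorial_pos)
    · rw [← dist_eq_norm, dist_comm]
      exact hfd
  -- ============ hypercyclic vector via Baire ============
  have hVclosed : IsClosed (V : Set B) := Submodule.isClosed_topologicalClosure _
  haveI : CompleteSpace V := hVclosed.completeSpace_coe
  haveI : SecondCountableTopology B :=
    UniformSpace.secondCountable_of_separable B
  haveI : Nonempty V := ⟨0⟩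
  obtain ⟨u, hu⟩ := TopologicalSpace.exists_dense_seq V
  set G : ℕ × ℕ → Set V := fun p =>
    {f | ∃ t : ℝ, 0 ≤ t ∧ ‖T t (f : B) - (u p.1 : B)‖ < 1 / (p.2 + 1)} with hGdef
  have hGopen : ∀ p, IsOpen (G p) := by
    intro p
    have hrw : G p = ⋃ (t : ℝ), ⋃ (_ : 0 ≤ t),
        {f : V | ‖T t (f : B) - (u p.1 : B)‖ < 1 / (p.2 + 1)} := by
      ext f
      simp [hGdef]
    rw [hrw]
    refine isOpen_iUnion fun t => isOpen_iUnion fun _ => ?_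
    have hcont : Continuous fun f : V => ‖T t (f : B) - (u p.1 : B)‖ :=
      (((T t).continuous.comp continuous_subtype_val).sub continuous_const).norm
    exact isOpen_lt hcont continuous_const
  have hGdense : ∀ p, Dense (G p) := by
    intro p
    rw [Metric.dense_iff]
    intro f₀ r hr
    obtain ⟨f, hfmem, t, ht0, hfd, hfT⟩ :=
      htrans (f₀ : B) f₀.2 (u p.1 : B) (u p.1).2 r hr (1 / (p.2 + 1)) (by positivity)
    have hfV : f ∈ V := (Submodule.span ℂ (F '' Ω)).le_topologicalClosure hfmem
    refine ⟨⟨f, hfV⟩, ?_, t, ht0, hfT⟩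
    rw [Metric.mem_ball, Subtype.dist_eq, dist_eq_norm]
    exact hfd
  haveI : BaireSpace V := inferInstance
  have hBaire : Dense (⋂ p, G p) := dense_iInter_of_isOpen hGopen hGdense
  obtain ⟨fhc, hfhc⟩ := hBaire.nonempty
  have hHC : ∃ f ∈ V, ∀ g ∈ V, ∀ ε : ℝ, 0 < ε → ∃ t : ℝ, 0 ≤ t ∧ ‖T t f - g‖ < ε := by
    refine ⟨(fhc : B), fhc.2, ?_⟩
    intro g hg ε hε
    obtain ⟨n, hn⟩ := exists_nat_one_div_lt (show (0 : ℝ) < ε / 2 by positivity)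
    obtain ⟨j, hj⟩ := hu.exists_dist_lt (⟨g, hg⟩ : V) (show (0 : ℝ) < ε / 2 by positivity)
    have hmem : fhc ∈ G (j, n) := mem_iInter.1 hfhc (j, n)
    obtain ⟨t, ht0, hlt⟩ := hmem
    refine ⟨t, ht0, ?_⟩
    have hdist : ‖(u j : B) - g‖ < ε / 2 := by
      rw [Subtype.dist_eq, dist_eq_norm] at hj
      rw [← norm_sub_rev]
      exact hj
    calc ‖T t (fhc : B) - g‖ = ‖(T t (fhc : B) - (u j : B)) + ((u j : B) - g)‖ := by
          rw [sub_add_sub_cancel]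
      _ ≤ ‖T t (fhc : B) - (u j : B)‖ + ‖(u j : B) - g‖ := norm_add_le _ _
      _ < 1 / (n + 1) + ε / 2 := add_lt_add hlt hdist
      _ < ε / 2 + ε / 2 := by exact add_lt_add_of_lt_of_le hn le_rfl
      _ = ε := by ring
  exact ⟨hVne, hTV, hHC, hPer⟩
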